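/- In max-times algebra, for any n×n nonnegative matrix B with Tr(B) ≤ 1, the identity B* ⊗ (1ᵀ ⊗ B*)⁻ = (1ᵀ ⊗ B*)⁻ holds, where 1 is the all-ones vector; equivalently, for each i, max_j (B*)_{ij} / ‖b*_j‖ = 1/‖b*_i‖, where ‖b*_j‖ = max_i (B*)_{ij} is the maximum of column j of B*. -/

import Mathlib

/-- Maximum of a function over `Fin n` (nonempty since `0 < n`). -/
noncomputable def vmax {n : ℕ} (hn : 0 < n) (f : Fin n → ℝ) : ℝ :=
  Finset.univ.sup' (Finset.univ_nonempty_iff.mpr ⟨⟨0, hn⟩⟩) f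

/-- Minimum of a function over `Fin n`. -/
noncomputable def vmin {n : ℕ} (hn : 0 < n) (f : Fin n → ℝ) : ℝ :=
  Finset.univ.inf' (Finset.univ_nonempty_iff.mpr ⟨⟨0, hn⟩⟩) f

/-- Max-times matrix product. -/
noncomputable def mtProd {n : ℕ} (hn : 0 < n) (X Y : Matrix (Fin n) (Fin n) ℝ) :
    Matrix (Fin n) (Fin n) ℝ :=
  fun i j => vmax hn (fun k => X i k * Y k j)

/-- Max-times matrix powers, `B^0 = I`. -/
noncomputable def mtPow {n : ℕ} (hn : 0 < n) (B : Matrix (Fin n) (Fin n) ℝ) :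
    ℕ → Matrix (Fin n) (Fin n) ℝ
  | 0 => fun i j => if i = j then (1 : ℝ) else 0
  | (k + 1) => mtProd hn B (mtPow hn B k)

/-- Kleene star: entrywise maximum of `B^0, ..., B^(n-1)`. -/
noncomputable def kstar {n : ℕ} (hn : 0 < n) (B : Matrix (Fin n) (Fin n) ℝ) :
    Matrix (Fin n) (Fin n) ℝ :=
  fun i j => vmax hn (fun k : Fin n => mtPow hn B k.1 i j)

/-- Max-times matrix-vector product. -/
noncomputable def mtVec {n : ℕ} (hn : 0 < n) (X : Matrix (Fin n) (Fin n) ℝ)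
    (x : Fin n → ℝ) : Fin n → ℝ :=
  fun i => vmax hn (fun j => X i j * x j)

lemma le_vmax {n : ℕ} (hn : 0 < n) (f : Fin n → ℝ) (j : Fin n) : f j ≤ vmax hn f :=
  Finset.le_sup' f (Finset.mem_univ j)

lemma vmax_le {n : ℕ} (hn : 0 < n) {f : Fin n → ℝ} {c : ℝ} (h : ∀ j, f j ≤ c) :
    vmax hn f ≤ c :=
  Finset.sup'_le _ f fun j _ => h j

lemma exists_vmax {n : ℕ} (hn : 0 < n) (f : Fin n → ℝ) : ∃ j, vmax hn f = f j := by
  obtain ⟨j, -, h⟩ := Finset.exists_mem_eq_sup' (Finset.univ_nonempty_iff.mpr ⟨⟨0, hn⟩⟩) f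
  exact ⟨j, h⟩

lemma mtPow_nonneg {n : ℕ} (hn : 0 < n) (B : Matrix (Fin n) (Fin n) ℝ)
    (hB : ∀ i j, 0 ≤ B i j) : ∀ m i j, 0 ≤ mtPow hn B m i j := by
  intro m
  induction m with
  | zero => intro i j; simp only [mtPow]; split <;> norm_num
  | succ m ih =>
    intro i j
    refine le_trans ?_ (le_vmax hn _ ⟨0, hn⟩)
    exact mul_nonneg (hB i _) (ih _ j)

noncomputable def pw {n : ℕ} (B : Matrix (Fin n) (Fin n) ℝ) (q : ℕ → Fin n) (m : ℕ) : ℝ :=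
  ∏ t ∈ Finset.range m, B (q t) (q (t + 1))

lemma pw_nonneg {n : ℕ} (B : Matrix (Fin n) (Fin n) ℝ) (hB : ∀ i j, 0 ≤ B i j)
    (q : ℕ → Fin n) (m : ℕ) : 0 ≤ pw B q m :=
  Finset.prod_nonneg fun t _ => hB _ _

lemma pw_le_pow {n : ℕ} (hn : 0 < n) (B : Matrix (Fin n) (Fin n) ℝ)
    (hB : ∀ i j, 0 ≤ B i j) :
    ∀ (m : ℕ) (q : ℕ → Fin n), pw B q m ≤ mtPow hn B m (q 0) (q m) := by
  intro m
  induction m with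
  | zero => intro q; simp [pw, mtPow]
  | succ m ih =>
    intro q
    have h1 : pw B q (m+1) = pw B (fun t => q (t+1)) m * B (q 0) (q 1) := by
      simp only [pw, Finset.prod_range_succ']
    rw [h1]
    calc pw B (fun t => q (t+1)) m * B (q 0) (q 1)
        ≤ mtPow hn B m (q 1) (q (m+1)) * B (q 0) (q 1) :=
          mul_le_mul_of_nonneg_right (ih (fun t => q (t+1))) (hB _ _)
      _ = B (q 0) (q 1) * mtPow hn B m (q 1) (q (m+1)) := mul_comm _ _
      _ ≤ mtPow hn B (m+1) (q 0) (q (m+1)) :=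
          le_vmax hn (fun k => B (q 0) k * mtPow hn B m k (q (m+1))) (q 1)

lemma pow_le_pw {n : ℕ} (hn : 0 < n) (B : Matrix (Fin n) (Fin n) ℝ)
    (hB : ∀ i j, 0 ≤ B i j) :
    ∀ (m : ℕ) (l j : Fin n), ∃ q : ℕ → Fin n,
      q 0 = l ∧ q (m+1) = j ∧ mtPow hn B (m+1) l j ≤ pw B q (m+1) := by
  intro m
  induction m with
  | zero =>
    intro l j
    refine ⟨fun t => if t = 0 then l else j, by simp, by simp, ?_⟩
    have h1 : mtPow hn B 1 l j ≤ B l j := by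
      apply vmax_le hn
      intro k
      simp only [mtPow]
      split
      · next h => subst h; simp
      · simp [hB l j]
    simpa [pw] using h1
  | succ m ih =>
    intro l j
    obtain ⟨k, hk⟩ := exists_vmax hn (fun k => B l k * mtPow hn B (m+1) k j)
    obtain ⟨q, hq0, hqm, hle⟩ := ih k j
    refine ⟨fun t => if t = 0 then l else q (t - 1), by simp, by simp [hqm], ?_⟩
    have hpw : pw B (fun t => if t = 0 then l else q (t-1)) (m+2)
        = pw B q (m+1) * B l (q 0) := by
      simp only [pw, Finset.prod_range_succ']
      congr 1
    rw [hpw, hq0]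
    have : mtPow hn B (m+2) l j = B l k * mtPow hn B (m+1) k j := hk
    rw [this, mul_comm]
    exact mul_le_mul_of_nonneg_right hle (hB _ _)

lemma pw_add {n : ℕ} (B : Matrix (Fin n) (Fin n) ℝ) (q : ℕ → Fin n) (a s : ℕ) :
    pw B q (a + s) = pw B q a * pw B (fun t => q (a + t)) s := by
  simp [pw, Finset.prod_range_add, Nat.add_assoc]

lemma pump {n : ℕ} (hn : 0 < n) (B : Matrix (Fin n) (Fin n) ℝ)
    (hB : ∀ i j, 0 ≤ B i j) (q : ℕ → Fin n) (a c s : ℕ)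
    (hqq : q (a + c) = q a) (hcyc : mtPow hn B c (q a) (q a) ≤ 1) :
    ∃ q' : ℕ → Fin n, q' 0 = q 0 ∧ q' (a + s) = q (a + c + s) ∧
      pw B q (a + c + s) ≤ pw B q' (a + s) := by
  set q' : ℕ → Fin n := fun t => if t ≤ a then q t else q (t + c) with hq'
  have hq'0 : q' 0 = q 0 := by simp [hq']
  have hq'end : q' (a + s) = q (a + c + s) := by
    rcases Nat.eq_zero_or_pos s with hs | hs
    · subst hs
      simp only [hq', add_zero, le_refl, if_pos]
      rw [← hqq]
    · have h1 : ¬ (a + s ≤ a) := by omega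
      simp only [hq', h1, if_false]
      congr 1
      omega
  refine ⟨q', hq'0, hq'end, ?_⟩
  have e1 : a + c + s = a + (c + s) := by omega
  rw [e1, pw_add, pw_add, pw_add]
  have h2 : pw B q' a = pw B q a := by
    apply Finset.prod_congr rfl
    intro t ht
    have ht' : t < a := Finset.mem_range.mp ht
    have e2 : q' t = q t := by simp [hq', le_of_lt ht']
    have h4 : t + 1 ≤ a := ht'
    have e3 : q' (t + 1) = q (t + 1) := by simp [hq', h4]
    rw [e2, e3]
  have h3 : pw B (fun t => q' (a + t)) s = pw B (fun t => q (a + (c + t))) s := by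
    apply Finset.prod_congr rfl
    intro t _
    have e2 : q' (a + t) = q (a + (c + t)) := by
      rcases Nat.eq_zero_or_pos t with h | h
      · subst h
        simp only [hq', add_zero, le_refl, if_pos]
        rw [← hqq]
      · have h1 : ¬ (a + t ≤ a) := by omega
        simp only [hq', h1, if_false]
        congr 1
        omega
    have e3 : q' (a + t + 1) = q (a + (c + (t + 1))) := by
      have h1 : ¬ (a + t + 1 ≤ a) := by omega
      simp only [hq', h1, if_false]
      congr 1
      omega
    show B (q' (a + t)) (q' (a + t + 1)) = B (q (a + (c + t))) (q (a + (c + (t + 1))))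
    rw [e2, e3]
  rw [h2, h3]
  have hmid : pw B (fun t => q (a + t)) c ≤ 1 := by
    have h := pw_le_pow hn B hB c (fun t => q (a + t))
    simp only [add_zero] at h
    calc pw B (fun t => q (a + t)) c ≤ mtPow hn B c (q a) (q (a + c)) := h
      _ = mtPow hn B c (q a) (q a) := by rw [hqq]
      _ ≤ 1 := hcyc
  calc pw B q a * (pw B (fun t => q (a + t)) c * pw B (fun t => q (a + (c + t))) s)
      ≤ pw B q a * (1 * pw B (fun t => q (a + (c + t))) s) := by
        apply mul_le_mul_of_nonneg_left _ (pw_nonneg B hB q a)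
        exact mul_le_mul_of_nonneg_right hmid (pw_nonneg B hB _ s)
    _ = pw B q a * pw B (fun t => q (a + (c + t))) s := by ring

lemma mtPow_le_kstarMT {n : ℕ} (hn : 0 < n) (B : Matrix (Fin n) (Fin n) ℝ)
    (hB : ∀ i j, 0 ≤ B i j)
    (hTr : ∀ k, 1 ≤ k → k ≤ n → ∀ i, mtPow hn B k i i ≤ 1) :
    ∀ m l j, mtPow hn B m l j ≤ kstar hn B l j := by
  intro m
  induction m using Nat.strong_induction_on with
  | _ m ih =>
  intro l j
  by_cases hm : m < n
  · exact le_vmax hn (fun k : Fin n => mtPow hn B k.1 l j) ⟨m, hm⟩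
  · push_neg at hm
    obtain ⟨m', rfl⟩ : ∃ m', m = m' + 1 := ⟨m - 1, by omega⟩
    obtain ⟨q, hq0, hqm, hle⟩ := pow_le_pw hn B hB m' l j
    have hcard : Fintype.card (Fin n) < Fintype.card (Fin (n+1)) := by simp
    obtain ⟨t1, t2, hne, heq⟩ :=
      Fintype.exists_ne_map_eq_of_card_lt (fun t : Fin (n+1) => q t.1) hcard
    have hab : ∃ a b, a < b ∧ b ≤ n ∧ q b = q a := by
      rcases lt_trichotomy t1.1 t2.1 with h | h | h
      · exact ⟨t1.1, t2.1, h, Nat.lt_succ_iff.mp t2.2, heq.symm⟩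
      · exact absurd (Fin.ext h) hne
      · exact ⟨t2.1, t1.1, h, Nat.lt_succ_iff.mp t1.2, heq⟩
    obtain ⟨a, b, hab1, hab2, hqab⟩ := hab
    set c := b - a with hc
    have hc1 : 1 ≤ c := by omega
    have hcn : c ≤ n := by omega
    set s := m' + 1 - b with hs
    have hm1 : m' + 1 = a + c + s := by omega
    have hb : b = a + c := by omega
    rw [hb] at hqab
    have hcyc : mtPow hn B c (q a) (q a) ≤ 1 := hTr c hc1 hcn (q a)
    obtain ⟨q', hq'0, hq'end, hq'le⟩ := pump hn B hB q a c s hqab hcyc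
    have key : mtPow hn B (m' + 1) l j ≤ mtPow hn B (a + s) l j := by
      calc mtPow hn B (m' + 1) l j ≤ pw B q (m' + 1) := hle
        _ = pw B q (a + c + s) := by rw [← hm1]
        _ ≤ pw B q' (a + s) := hq'le
        _ ≤ mtPow hn B (a + s) (q' 0) (q' (a + s)) := pw_le_pow hn B hB (a + s) q'
        _ = mtPow hn B (a + s) l j := by
            rw [hq'0, hq0, hq'end, ← hm1, hqm]
    exact key.trans (ih (a + s) (by omega) l j)

lemma pow_mul_le {n : ℕ} (hn : 0 < n) (B : Matrix (Fin n) (Fin n) ℝ)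
    (hB : ∀ i j, 0 ≤ B i j) :
    ∀ (a b : ℕ) (l i j : Fin n),
      mtPow hn B a l i * mtPow hn B b i j ≤ mtPow hn B (a + b) l j := by
  intro a
  induction a with
  | zero =>
    intro b l i j
    simp only [mtPow, Nat.zero_add]
    split
    · next h => subst h; rw [one_mul]
    · rw [zero_mul]; exact mtPow_nonneg hn B hB b l j
  | succ a ih =>
    intro b l i j
    have e : a + 1 + b = (a + b) + 1 := by omega
    rw [e]
    obtain ⟨k, hk⟩ := exists_vmax hn (fun k => B l k * mtPow hn B a k i)
    have h1 : mtPow hn B (a+1) l i = B l k * mtPow hn B a k i := hk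
    rw [h1, mul_assoc]
    calc B l k * (mtPow hn B a k i * mtPow hn B b i j)
        ≤ B l k * mtPow hn B (a + b) k j :=
          mul_le_mul_of_nonneg_left (ih b k i j) (hB l k)
      _ ≤ mtPow hn B ((a + b) + 1) l j :=
          le_vmax hn (fun k => B l k * mtPow hn B (a + b) k j) k

lemma kstar_nonneg {n : ℕ} (hn : 0 < n) (B : Matrix (Fin n) (Fin n) ℝ)
    (hB : ∀ i j, 0 ≤ B i j) (i j : Fin n) : 0 ≤ kstar hn B i j :=
  le_trans (mtPow_nonneg hn B hB 0 i j)
    (le_vmax hn (fun k : Fin n => mtPow hn B k.1 i j) ⟨0, hn⟩)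

lemma one_le_kstar_diag {n : ℕ} (hn : 0 < n) (B : Matrix (Fin n) (Fin n) ℝ)
    (i : Fin n) : 1 ≤ kstar hn B i i := by
  have h := le_vmax hn (fun k : Fin n => mtPow hn B k.1 i i) ⟨0, hn⟩
  simpa [mtPow, kstar] using h

lemma kstarMT_mul_le {n : ℕ} (hn : 0 < n) (B : Matrix (Fin n) (Fin n) ℝ)
    (hB : ∀ i j, 0 ≤ B i j)
    (hTr : ∀ k, 1 ≤ k → k ≤ n → ∀ i, mtPow hn B k i i ≤ 1)
    (l i j : Fin n) : kstar hn B l i * kstar hn B i j ≤ kstar hn B l j := by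
  obtain ⟨a, ha⟩ := exists_vmax hn (fun k : Fin n => mtPow hn B k.1 l i)
  obtain ⟨b, hb⟩ := exists_vmax hn (fun k : Fin n => mtPow hn B k.1 i j)
  have h1 : kstar hn B l i = mtPow hn B a.1 l i := ha
  have h2 : kstar hn B i j = mtPow hn B b.1 i j := hb
  rw [h1, h2]
  exact (pow_mul_le hn B hB a.1 b.1 l i j).trans
    (mtPow_le_kstarMT hn B hB hTr (a.1 + b.1) l j)

theorem star_mul_normalizedColumns_identity {n : ℕ} (hn : 0 < n)
    (B : Matrix (Fin n) (Fin n) ℝ)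
    (hB : ∀ i j, 0 ≤ B i j)
    (hTr : ∀ k, 1 ≤ k → k ≤ n → ∀ i, mtPow hn B k i i ≤ 1) :
    ∀ i, vmax hn (fun j => kstar hn B i j / vmax hn (fun l => kstar hn B l j)) =
      1 / vmax hn (fun l => kstar hn B l i) := by
  intro i
  have hcolpos : ∀ j, 0 < vmax hn (fun l => kstar hn B l j) := by
    intro j
    calc (0:ℝ) < 1 := one_pos
      _ ≤ kstar hn B j j := one_le_kstar_diag hn B j
      _ ≤ vmax hn (fun l => kstar hn B l j) := le_vmax hn (fun l => kstar hn B l j) j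
  apply le_antisymm
  · apply vmax_le hn
    intro j
    rw [div_le_div_iff₀ (hcolpos j) (hcolpos i), one_mul]
    obtain ⟨l, hl⟩ := exists_vmax hn (fun l => kstar hn B l i)
    rw [hl]
    calc kstar hn B i j * kstar hn B l i = kstar hn B l i * kstar hn B i j := mul_comm _ _
      _ ≤ kstar hn B l j := kstarMT_mul_le hn B hB hTr l i j
      _ ≤ vmax hn (fun l => kstar hn B l j) := le_vmax hn (fun l => kstar hn B l j) l
  · calc 1 / vmax hn (fun l => kstar hn B l i)
        ≤ kstar hn B i i / vmax hn (fun l => kstar hn B l i) := by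
          gcongr
          · exact (hcolpos i).le
          · exact one_le_kstar_diag hn B i
      _ ≤ vmax hn (fun j => kstar hn B i j / vmax hn (fun l => kstar hn B l j)) :=
          le_vmax hn (fun j => kstar hn B i j / vmax hn (fun l => kstar hn B l j)) i
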